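/- arXiv:1703.00289 — 2 statements merged into one kernel-verified Lean document; each statement's English description precedes it below -/
import Mathlib

section
/- Linear programming duality characterization of optimal transport solutions: a matrix X ∈ ℝ_+^{n×m} is an optimal solution of the problem of maximizing ∑_{i,j} a_{ij} x_{ij} subject to ∑_i x_{ij} = c_j, ∑_j x_{ij} = r_i, and x_{ij} ≥ 0, if and only if X is feasible and there exist λ ∈ ℝ^n and μ ∈ ℝ^m such that a_{ij} ≤ λ_i + μ_j for all (i,j), with equality whenever x_{ij} > 0. -/
open Finset

/-- Feasibility for the transport problem: nonnegativity and both marginals. -/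
def Feasible {ι κ : Type*} [Fintype ι] [Fintype κ]
    (r : ι → ℝ) (c : κ → ℝ) (X : ι → κ → ℝ) : Prop :=
  (∀ i j, 0 ≤ X i j) ∧ (∀ j, ∑ i, X i j = c j) ∧ (∀ i, ∑ j, X i j = r i)

section FarkasAux

open Topology
open scoped InnerProductSpace

variable {H : Type*} [NormedAddCommGroup H] [InnerProductSpace ℝ H] [FiniteDimensional ℝ H]

lemma cone_caratheodory {α : Type*} [Fintype α] [DecidableEq α] (v : α → H) :
    ∀ s : Finset α, ∀ t : α → ℝ, (∀ a, 0 ≤ t a) →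
      ∃ s' : Finset α, s' ⊆ s ∧ LinearIndependent ℝ (fun a : s' => v a) ∧
        ∃ t' : α → ℝ, (∀ a, 0 ≤ t' a) ∧ ∑ a ∈ s', t' a • v a = ∑ a ∈ s, t a • v a := by
  intro s
  induction s using Finset.strongInduction with
  | _ s ih =>
    intro t ht
    by_cases hli : LinearIndependent ℝ (fun a : s => v a)
    · exact ⟨s, Finset.Subset.refl s, hli, t, ht, rfl⟩
    · obtain ⟨g, hgsum, i0, hgne⟩ := Fintype.not_linearIndependent_iff.1 hli
      have key : ∀ G : α → ℝ, (∀ a, a ∉ s → G a = 0) → (∑ a ∈ s, G a • v a = 0) →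
          (∃ a ∈ s, 0 < G a) →
          ∃ s' : Finset α, s' ⊆ s ∧ LinearIndependent ℝ (fun a : s' => v a) ∧
            ∃ t' : α → ℝ, (∀ a, 0 ≤ t' a) ∧ ∑ a ∈ s', t' a • v a = ∑ a ∈ s, t a • v a := by
        rintro G hG0 hGsum ⟨ap, hap, hapos⟩
        set P : Finset α := s.filter (fun a => 0 < G a) with hP
        have hPne : P.Nonempty := ⟨ap, Finset.mem_filter.2 ⟨hap, hapos⟩⟩
        obtain ⟨a0, ha0P, ha0min⟩ := P.exists_min_image (fun a => t a / G a) hPne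
        have ha0s : a0 ∈ s := (Finset.mem_filter.1 ha0P).1
        have hGa0 : 0 < G a0 := (Finset.mem_filter.1 ha0P).2
        set r : ℝ := t a0 / G a0 with hr
        have hr0 : 0 ≤ r := div_nonneg (ht a0) hGa0.le
        set t2 : α → ℝ := fun a => t a - r * G a with ht2
        have ht2nn : ∀ a, 0 ≤ t2 a := by
          intro a
          by_cases hGa : 0 < G a
          · have has : a ∈ s := by
              by_contra hns
              rw [hG0 a hns] at hGa; exact lt_irrefl 0 hGa
            have h1 : r ≤ t a / G a := ha0min a (Finset.mem_filter.2 ⟨has, hGa⟩)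
            have h2 : r * G a ≤ t a := (le_div_iff₀ hGa).1 h1
            simp only [ht2]; linarith
          · push_neg at hGa
            have : r * G a ≤ 0 := mul_nonpos_of_nonneg_of_nonpos hr0 hGa
            simp only [ht2]; linarith [ht a]
        have ht2a0 : t2 a0 = 0 := by
          simp only [ht2, hr]; field_simp; ring
        have hsum2 : ∑ a ∈ s, t2 a • v a = ∑ a ∈ s, t a • v a := by
          simp only [ht2, sub_smul, Finset.sum_sub_distrib, mul_smul]
          rw [← Finset.smul_sum, hGsum, smul_zero, sub_zero]
        have hsub : s.erase a0 ⊂ s := Finset.erase_ssubset ha0s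
        have hsum3 : ∑ a ∈ s.erase a0, t2 a • v a = ∑ a ∈ s, t a • v a := by
          rw [← hsum2, ← Finset.add_sum_erase s _ ha0s, ht2a0, zero_smul, zero_add]
        obtain ⟨s', hs'sub, hs'li, t', ht'nn, ht'sum⟩ := ih (s.erase a0) hsub t2 ht2nn
        exact ⟨s', hs'sub.trans (Finset.erase_subset a0 s), hs'li, t', ht'nn,
          ht'sum.trans hsum3⟩
      set G : α → ℝ := fun a => if h : a ∈ s then g ⟨a, h⟩ else 0 with hG
      have hGsum : ∑ a ∈ s, G a • v a = 0 := by
        rw [← hgsum, ← Finset.sum_attach s (fun a => G a • v a)]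
        exact Finset.sum_congr rfl fun a _ => by simp [hG, a.2]
      by_cases hpos : ∃ a ∈ s, 0 < G a
      · exact key G (fun a ha => by simp [hG, ha]) hGsum hpos
      · refine key (-G) (fun a ha => by simp [hG, ha]) ?_ ?_
        · simp only [Pi.neg_apply, neg_smul, Finset.sum_neg_distrib, hGsum, neg_zero]
        · push_neg at hpos
          refine ⟨i0, i0.2, ?_⟩
          have hGi0 : G i0 = g i0 := by simp [hG, i0.2]
          have h1 : G i0 ≤ 0 := hpos i0 i0.2
          have h2 : G i0 ≠ 0 := by rw [hGi0]; exact hgne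
          simp only [Pi.neg_apply]
          cases lt_or_eq_of_le h1 with
          | inl h => linarith
          | inr h => exact absurd h h2

lemma cone_isClosed {α : Type*} [Fintype α] (v : α → H) :
    IsClosed {x : H | ∃ t : α → ℝ, (∀ a, 0 ≤ t a) ∧ ∑ a, t a • v a = x} := by
  classical
  have hrw : {x : H | ∃ t : α → ℝ, (∀ a, 0 ≤ t a) ∧ ∑ a, t a • v a = x} =
      ⋃ s ∈ {s : Finset α | LinearIndependent ℝ (fun a : s => v a)},
        (fun t : s → ℝ => ∑ a : s, t a • v a) '' {t | ∀ a, 0 ≤ t a} := by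
    ext x
    simp only [Set.mem_setOf_eq, Set.mem_iUnion, Set.mem_image]
    constructor
    · rintro ⟨t, htnn, htsum⟩
      obtain ⟨s', hsub, hli, t', ht'nn, ht'sum⟩ :=
        cone_caratheodory v Finset.univ t htnn
      refine ⟨s', hli, fun a => t' a, fun a => ht'nn a, ?_⟩
      rw [Finset.univ_eq_attach, Finset.sum_attach s' (fun a => t' a • v a)]
      exact ht'sum.trans htsum
    · rintro ⟨s, hli, t, htnn, htsum⟩
      refine ⟨fun a => if h : a ∈ s then t ⟨a, h⟩ else 0, ?_, ?_⟩
      · intro a; by_cases h : a ∈ s <;> simp [h]; exact htnn ⟨a, h⟩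
      · rw [← htsum]
        calc ∑ a : α, (fun a => if h : a ∈ s then t ⟨a, h⟩ else 0) a • v a
            = ∑ a ∈ s, (if h : a ∈ s then t ⟨a, h⟩ else 0) • v a :=
              (Finset.sum_subset (Finset.subset_univ s) (fun a _ ha => by simp [ha])).symm
          _ = ∑ a ∈ s.attach, (if h : (a : α) ∈ s then t ⟨a, h⟩ else 0) • v a :=
              (Finset.sum_attach s fun a => (if h : a ∈ s then t ⟨a, h⟩ else 0) • v a).symm
          _ = ∑ a : { x // x ∈ s }, t a • v ↑a := by
              rw [← Finset.univ_eq_attach]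
              exact Finset.sum_congr rfl fun a _ => by simp [a.2]
  rw [hrw]
  refine Set.Finite.isClosed_biUnion (Set.toFinite _) ?_
  rintro s hli
  have hL : ∃ L : (s → ℝ) →ₗ[ℝ] H, (⇑L = fun t : s → ℝ => ∑ a : s, t a • v a) ∧
      LinearMap.ker L = ⊥ := by
    refine ⟨{ toFun := fun t => ∑ a : s, t a • v a,
              map_add' := by intro x y; simp [add_smul, Finset.sum_add_distrib],
              map_smul' := by intro c x; simp [mul_smul, Finset.smul_sum] }, rfl, ?_⟩
    rw [LinearMap.ker_eq_bot']
    intro m hm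
    have := Fintype.linearIndependent_iff.1 hli m hm
    funext a; exact this a
  obtain ⟨L, hLeq, hLker⟩ := hL
  have hemb : IsClosedEmbedding ⇑L := LinearMap.isClosedEmbedding_of_injective hLker
  have : (fun t : s → ℝ => ∑ a : s, t a • v a) '' {t | ∀ a, 0 ≤ t a}
      = ⇑L '' {t | ∀ a, 0 ≤ t a} := by rw [hLeq]
  rw [this]
  refine hemb.isClosedMap _ ?_
  have : {t : s → ℝ | ∀ a, 0 ≤ t a} = ⋂ a, {t : s → ℝ | 0 ≤ t a} := by
    ext; simp [Set.mem_iInter]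
  rw [this]
  exact isClosed_iInter fun a => isClosed_le continuous_const (continuous_apply a)

theorem farkas_cone {α : Type*} [Fintype α] (v : α → H) (b : H)
    (h : ∀ y : H, (∀ a, 0 ≤ ⟪v a, y⟫_ℝ) → 0 ≤ ⟪b, y⟫_ℝ) :
    ∃ t : α → ℝ, (∀ a, 0 ≤ t a) ∧ ∑ a, t a • v a = b := by
  classical
  by_contra hb
  haveI : CompleteSpace H := FiniteDimensional.complete ℝ H
  set K : ConvexCone ℝ H :=
    { carrier := {x : H | ∃ t : α → ℝ, (∀ a, 0 ≤ t a) ∧ ∑ a, t a • v a = x}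
      smul_mem' := by
        rintro c hc x ⟨t, htnn, htsum⟩
        exact ⟨fun a => c * t a, fun a => mul_nonneg hc.le (htnn a), by
          simp only [mul_smul, ← Finset.smul_sum, htsum]⟩
      add_mem' := by
        rintro x ⟨t, htnn, htsum⟩ y ⟨u, hunn, husum⟩
        exact ⟨fun a => t a + u a, fun a => add_nonneg (htnn a) (hunn a), by
          simp only [add_smul, Finset.sum_add_distrib, htsum, husum]⟩ } with hK
  have hKne : (K : Set H).Nonempty := ⟨0, fun _ => 0, fun _ => le_refl 0, by simp⟩
  have hKcl : IsClosed (K : Set H) := cone_isClosed v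
  have hbK : b ∉ K := fun ⟨t, htnn, htsum⟩ => hb ⟨t, htnn, htsum⟩
  obtain ⟨y, hy1, hy2⟩ : ∃ y : H, (∀ x ∈ K, 0 ≤ ⟪x, y⟫_ℝ) ∧ ⟪y, b⟫_ℝ < 0 := by
    let C : ProperCone ℝ H :=
      { carrier := (K : Set H)
        add_mem' := fun hx hy => K.add_mem hx hy
        zero_mem' := ⟨fun _ => 0, fun _ => le_refl 0, by simp⟩
        smul_mem' := by
          rintro c x ⟨t, htnn, htsum⟩
          exact ⟨fun a => (c : ℝ) * t a, fun a => mul_nonneg c.2 (htnn a), by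
            simp only [mul_smul, ← Finset.smul_sum, htsum]; exact (NNReal.smul_def c x).symm⟩
        isClosed' := hKcl }
    obtain ⟨y, h1, h2⟩ := ProperCone.hyperplane_separation' C (x₀ := b) hbK
    exact ⟨y, fun x hx => h1 x hx, by rw [real_inner_comm]; exact h2⟩
  have hva : ∀ a, 0 ≤ ⟪v a, y⟫_ℝ := by
    intro a
    refine hy1 (v a) ⟨fun a' => if a' = a then 1 else 0, fun a' => by positivity, ?_⟩
    simp [ite_smul]
  have := h y hva
  rw [real_inner_comm] at hy2
  linarith

theorem farkas_ineq {K n : Type*} [Fintype K] [Fintype n] [DecidableEq K]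
    (w : K → n → ℝ) (b : K → ℝ)
    (h : ∀ z : K → ℝ, (∀ k, 0 ≤ z k) → (∀ e, ∑ k, z k * w k e = 0) →
      ∑ k, z k * b k ≤ 0) :
    ∃ p : n → ℝ, ∀ k, b k ≤ ∑ e, w k e * p e := by
  classical
  have inner_eq : ∀ x y : EuclideanSpace ℝ K, ⟪x, y⟫_ℝ = ∑ k, x k * y k := by
    intro x y
    rw [PiLp.inner_apply]; simp [RCLike.inner_apply, starRingEnd_apply]
    exact Finset.sum_congr rfl fun _ _ => mul_comm _ _
  set v : (n ⊕ (n ⊕ K)) → EuclideanSpace ℝ K := fun a =>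
    Sum.elim (fun e => WithLp.toLp 2 (fun k => w k e : K → ℝ))
      (Sum.elim (fun e => WithLp.toLp 2 (fun k => -(w k e) : K → ℝ))
        (fun k0 => WithLp.toLp 2 (fun k => -(if k = k0 then (1:ℝ) else 0) : K → ℝ))) a with hv
  set B : EuclideanSpace ℝ K := WithLp.toLp 2 (fun k => b k : K → ℝ) with hB
  have hhyp : ∀ y : EuclideanSpace ℝ K, (∀ a, 0 ≤ ⟪v a, y⟫_ℝ) → 0 ≤ ⟪B, y⟫_ℝ := by
    intro y hy
    set z : K → ℝ := fun k => -(y k) with hz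
    have hznn : ∀ k, 0 ≤ z k := by
      intro k
      have hk := hy (Sum.inr (Sum.inr k))
      rw [inner_eq] at hk
      have hsum : ∑ k', (v (Sum.inr (Sum.inr k)) k') * y k' = -(y k) := by
        have : ∀ k', v (Sum.inr (Sum.inr k)) k' = -(if k' = k then (1:ℝ) else 0) :=
          fun k' => rfl
        simp only [this]
        rw [Finset.sum_eq_single k]
        · simp
        · intro k' _ hk'; simp [hk']
        · intro hk'; exact absurd (Finset.mem_univ k) hk'
      rw [hsum] at hk
      simpa [hz] using hk
    have hzw : ∀ e, ∑ k, z k * w k e = 0 := by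
      intro e
      have h1 := hy (Sum.inl e)
      have h2 := hy (Sum.inr (Sum.inl e))
      rw [inner_eq] at h1 h2
      have e1 : ∀ k, v (Sum.inl e) k = w k e := fun k => rfl
      have e2 : ∀ k, v (Sum.inr (Sum.inl e)) k = -(w k e) := fun k => rfl
      simp only [e1] at h1
      simp only [e2] at h2
      have hno : ∑ k, -(w k e) * y k = -∑ k, w k e * y k := by simp
      rw [hno] at h2
      have hzero : ∑ k, w k e * y k = 0 := le_antisymm (by linarith) h1
      calc ∑ k, z k * w k e = -∑ k, w k e * y k := by
            simp only [hz]
            rw [← Finset.sum_neg_distrib]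
            exact Finset.sum_congr rfl fun k _ => by ring
        _ = 0 := by rw [hzero, neg_zero]
    have hle := h z hznn hzw
    rw [inner_eq]
    have hBy : ∑ k, B k * y k = -∑ k, z k * b k := by
      simp only [hz, hB]
      rw [← Finset.sum_neg_distrib]
      exact Finset.sum_congr rfl fun k _ => by ring
    rw [hBy]
    linarith

  obtain ⟨t, htnn, htsum⟩ := farkas_cone v B hhyp
  refine ⟨fun e => t (Sum.inl e) - t (Sum.inr (Sum.inl e)), fun k => ?_⟩
  have hcoord : ∑ a, (t a • v a) k = b k := by
    rw [← Finset.sum_apply k Finset.univ (fun a => (t a • v a).ofLp), ← WithLp.ofLp_sum, htsum]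
  have hsplit : ∀ a, (t a • v a) k = t a * v a k := fun a => rfl
  simp only [hsplit] at hcoord
  rw [Fintype.sum_sum_type, Fintype.sum_sum_type] at hcoord
  have hA : ∀ e, v (Sum.inl e) k = w k e := fun e => rfl
  have hB1 : ∀ e, v (Sum.inr (Sum.inl e)) k = -(w k e) := fun e => rfl
  have hC : ∀ k0, v (Sum.inr (Sum.inr k0)) k = -(if k = k0 then (1:ℝ) else 0) :=
    fun k0 => rfl
  simp only [hA, hB1, hC] at hcoord
  have h3 : ∑ k0, t (Sum.inr (Sum.inr k0)) * (-(if k = k0 then (1:ℝ) else 0)) =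
      -(t (Sum.inr (Sum.inr k))) := by
    rw [Finset.sum_eq_single k]
    · simp
    · intro k0 _ hk0; simp [Ne.symm hk0]
    · intro hk; exact absurd (Finset.mem_univ k) hk
  rw [h3] at hcoord
  have hneg : ∑ e, t (Sum.inr (Sum.inl e)) * (-(w k e))
      = -∑ e, t (Sum.inr (Sum.inl e)) * w k e := by
    simp [mul_neg]
  rw [hneg] at hcoord
  have hfin : ∑ e, w k e * (t (Sum.inl e) - t (Sum.inr (Sum.inl e)))
      = b k + t (Sum.inr (Sum.inr k)) := by
    have : ∑ e, w k e * (t (Sum.inl e) - t (Sum.inr (Sum.inl e)))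
        = ∑ e, t (Sum.inl e) * w k e - ∑ e, t (Sum.inr (Sum.inl e)) * w k e := by
      rw [← Finset.sum_sub_distrib]
      exact Finset.sum_congr rfl fun e _ => by ring
    rw [this]; linarith
  rw [hfin]; linarith [htnn (Sum.inr (Sum.inr k))]

lemma sum_pick {γ δ : Type*} [Fintype γ] [Fintype δ] [DecidableEq γ] (i : γ) (f : γ → δ → ℝ) :
    ∑ p : γ × δ, (if i = p.1 then f p.1 p.2 else 0) = ∑ j, f i j := by
  rw [Fintype.sum_prod_type]
  simp [Finset.sum_ite_eq]

lemma sum_pick2 {γ δ : Type*} [Fintype γ] [Fintype δ] [DecidableEq δ] (j : δ) (f : γ → δ → ℝ) :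
    ∑ p : γ × δ, (if j = p.2 then f p.1 p.2 else 0) = ∑ i, f i j := by
  rw [Fintype.sum_prod_type]
  rw [Finset.sum_comm]
  simp [Finset.sum_ite_eq]


end FarkasAux

/-- LP duality characterization of optimal transport solutions. -/
theorem stmt_4 {ι κ : Type*} [Fintype ι] [Fintype κ]
    (a : ι → κ → ℝ) (r : ι → ℝ) (c : κ → ℝ)
    (hr : ∀ i, 0 < r i) (hc : ∀ j, 0 < c j)
    (hgf : ∑ i, r i = ∑ j, c j) (X : ι → κ → ℝ) :
    (Feasible r c X ∧
      ∀ Y : ι → κ → ℝ, Feasible r c Y →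
        ∑ i, ∑ j, a i j * Y i j ≤ ∑ i, ∑ j, a i j * X i j) ↔
    (Feasible r c X ∧
      ∃ (lam : ι → ℝ) (mu : κ → ℝ),
        ∀ i j, a i j ≤ lam i + mu j ∧ (0 < X i j → a i j = lam i + mu j)) := by
  classical
  constructor
  · rintro ⟨hF, hopt⟩
    refine ⟨hF, ?_⟩
    obtain ⟨hXnn, hXcol, hXrow⟩ := hF
    set w : ((ι × κ) ⊕ (ι × κ)) → (ι ⊕ κ) → ℝ := fun k =>
      Sum.elim
        (fun p => Sum.elim (fun i' => if i' = p.1 then (1:ℝ) else 0)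
                           (fun j' => if j' = p.2 then (1:ℝ) else 0))
        (fun p => Sum.elim
            (fun i' => if i' = p.1 then (if 0 < X p.1 p.2 then (-1:ℝ) else 0) else 0)
            (fun j' => if j' = p.2 then (if 0 < X p.1 p.2 then (-1:ℝ) else 0) else 0)) k
      with hw
    set bb : ((ι × κ) ⊕ (ι × κ)) → ℝ := fun k =>
      Sum.elim (fun p => a p.1 p.2)
        (fun p => if 0 < X p.1 p.2 then -(a p.1 p.2) else 0) k with hbb
    have hfar : ∀ z : ((ι × κ) ⊕ (ι × κ)) → ℝ, (∀ k, 0 ≤ z k) →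
        (∀ e, ∑ k, z k * w k e = 0) → ∑ k, z k * bb k ≤ 0 := by
      intro z hznn hzw
      set d : ι → κ → ℝ := fun i j =>
        z (Sum.inl (i, j)) - (if 0 < X i j then z (Sum.inr (i, j)) else 0) with hd
      have hrow : ∀ i, ∑ j, d i j = 0 := by
        intro i
        have hcon := hzw (Sum.inl i)
        rw [Fintype.sum_sum_type] at hcon
        have e1 : ∑ p : ι × κ, z (Sum.inl p) * w (Sum.inl p) (Sum.inl i)
            = ∑ j, z (Sum.inl (i, j)) := by
          rw [← sum_pick i (fun i' j' => z (Sum.inl (i', j')))]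
          exact Finset.sum_congr rfl fun p _ => by
            simp only [hw, Sum.elim_inl]
            by_cases h : i = p.1 <;> simp [h]
        have e2 : ∑ p : ι × κ, z (Sum.inr p) * w (Sum.inr p) (Sum.inl i)
            = ∑ j, -(if 0 < X i j then z (Sum.inr (i, j)) else 0) := by
          rw [← sum_pick i (fun i' j' => -(if 0 < X i' j' then z (Sum.inr (i', j')) else 0))]
          refine Finset.sum_congr rfl fun p _ => ?_
          simp only [hw, Sum.elim_inl, Sum.elim_inr]
          by_cases h : i = p.1
          · by_cases h2 : 0 < X p.1 p.2 <;> simp [h, h2]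
          · simp [h]
        rw [e1, e2] at hcon
        rw [← hcon, ← Finset.sum_add_distrib]
        exact Finset.sum_congr rfl fun j _ => by simp [hd]; ring
      have hcol : ∀ j, ∑ i, d i j = 0 := by
        intro j
        have hcon := hzw (Sum.inr j)
        rw [Fintype.sum_sum_type] at hcon
        have e1 : ∑ p : ι × κ, z (Sum.inl p) * w (Sum.inl p) (Sum.inr j)
            = ∑ i, z (Sum.inl (i, j)) := by
          rw [← sum_pick2 j (fun i' j' => z (Sum.inl (i', j')))]
          exact Finset.sum_congr rfl fun p _ => by
            simp only [hw, Sum.elim_inl, Sum.elim_inr]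
            by_cases h : j = p.2 <;> simp [h]
        have e2 : ∑ p : ι × κ, z (Sum.inr p) * w (Sum.inr p) (Sum.inr j)
            = ∑ i, -(if 0 < X i j then z (Sum.inr (i, j)) else 0) := by
          rw [← sum_pick2 j (fun i' j' => -(if 0 < X i' j' then z (Sum.inr (i', j')) else 0))]
          refine Finset.sum_congr rfl fun p _ => ?_
          simp only [hw, Sum.elim_inl, Sum.elim_inr]
          by_cases h : j = p.2
          · by_cases h2 : 0 < X p.1 p.2 <;> simp [h, h2]
          · simp [h]
        rw [e1, e2] at hcon
        rw [← hcon, ← Finset.sum_add_distrib]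
        exact Finset.sum_congr rfl fun i _ => by simp [hd]; ring
      have hdnn : ∀ i j, ¬ 0 < X i j → 0 ≤ d i j := by
        intro i j h
        simp [hd, h, hznn (Sum.inl (i, j))]
      -- choose epsilon
      set T : Finset (ι × κ) := Finset.univ.filter
        (fun p => 0 < X p.1 p.2 ∧ d p.1 p.2 < 0) with hT
      have hEps : ∃ ε : ℝ, 0 < ε ∧ ∀ i j, 0 < X i j → d i j < 0 → ε * (-(d i j)) ≤ X i j := by
        by_cases hTne : T.Nonempty
        · obtain ⟨p0, hp0, hmin⟩ := T.exists_min_image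
            (fun p => X p.1 p.2 / (-(d p.1 p.2))) hTne
          have hp0m := Finset.mem_filter.1 hp0
          have hdp0 : 0 < -(d p0.1 p0.2) := by linarith [hp0m.2.2]
          refine ⟨X p0.1 p0.2 / (-(d p0.1 p0.2)), div_pos hp0m.2.1 hdp0, ?_⟩
          intro i j hX hdij
          have hmem : (i, j) ∈ T := Finset.mem_filter.2 ⟨Finset.mem_univ _, hX, hdij⟩
          have := hmin (i, j) hmem
          have hdij' : 0 < -(d i j) := by linarith
          rw [div_le_div_iff₀ hdp0 hdij'] at this
          rw [← le_div_iff₀ hdij']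
          rw [div_le_div_iff₀ hdp0 hdij']
          exact this
        · exact ⟨1, one_pos, fun i j hX hdij => absurd
            (Finset.mem_filter.2 ⟨Finset.mem_univ _, hX, hdij⟩ : (i,j) ∈ T)
            (fun hm => hTne ⟨_, hm⟩)⟩
      obtain ⟨ε, hε, hεle⟩ := hEps
      set Y : ι → κ → ℝ := fun i j => X i j + ε * d i j with hY
      have hYfeas : Feasible r c Y := by
        refine ⟨?_, ?_, ?_⟩
        · intro i j
          by_cases hX : 0 < X i j
          · by_cases hdij : d i j < 0
            · have := hεle i j hX hdij
              simp only [hY]; nlinarith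
            · push_neg at hdij
              simp only [hY]; nlinarith
          · have h0 : X i j = 0 := le_antisymm (le_of_not_gt hX) (hXnn i j)
            have := hdnn i j hX
            simp only [hY, h0]; nlinarith
        · intro j
          simp only [hY]
          rw [Finset.sum_add_distrib, hXcol j, ← Finset.mul_sum, hcol j, mul_zero, add_zero]
        · intro i
          simp only [hY]
          rw [Finset.sum_add_distrib, hXrow i, ← Finset.mul_sum, hrow i, mul_zero, add_zero]
      have hcomp := hopt Y hYfeas
      have hexp : ∑ i, ∑ j, a i j * Y i j
          = (∑ i, ∑ j, a i j * X i j) + ε * ∑ i, ∑ j, a i j * d i j := by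
        rw [Finset.mul_sum, ← Finset.sum_add_distrib]
        refine Finset.sum_congr rfl fun i _ => ?_
        rw [Finset.mul_sum, ← Finset.sum_add_distrib]
        refine Finset.sum_congr rfl fun j _ => ?_
        simp only [hY]; ring
      have had : ∑ i, ∑ j, a i j * d i j ≤ 0 := by
        rw [hexp] at hcomp; nlinarith
      -- now compute the z·bb sum
      have hzbb : ∑ k, z k * bb k = ∑ i, ∑ j, a i j * d i j := by
        rw [Fintype.sum_sum_type]
        have e1 : ∑ p : ι × κ, z (Sum.inl p) * bb (Sum.inl p)
            = ∑ p : ι × κ, a p.1 p.2 * z (Sum.inl (p.1, p.2)) := by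
          exact Finset.sum_congr rfl fun p _ => by simp [hbb]; ring
        have e2 : ∑ p : ι × κ, z (Sum.inr p) * bb (Sum.inr p)
            = ∑ p : ι × κ, a p.1 p.2 *
                (-(if 0 < X p.1 p.2 then z (Sum.inr (p.1, p.2)) else 0)) := by
          refine Finset.sum_congr rfl fun p _ => ?_
          simp only [hbb, Sum.elim_inr]
          by_cases h : 0 < X p.1 p.2 <;> simp [h] <;> ring
        rw [e1, e2, ← Finset.sum_add_distrib, Fintype.sum_prod_type]
        refine Finset.sum_congr rfl fun i _ => Finset.sum_congr rfl fun j _ => ?_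
        simp only [hd]; ring
      rw [hzbb]; exact had
    obtain ⟨p, hp⟩ := farkas_ineq w bb hfar
    refine ⟨fun i => p (Sum.inl i), fun j => p (Sum.inr j), fun i j => ?_⟩
    have h1 := hp (Sum.inl (i, j))
    have h2 := hp (Sum.inr (i, j))
    have s1 : ∑ e, w (Sum.inl (i, j)) e * p e = p (Sum.inl i) + p (Sum.inr j) := by
      rw [Fintype.sum_sum_type]
      simp [hw, ite_mul, Finset.sum_ite_eq']
    have s2 : 0 < X i j → ∑ e, w (Sum.inr (i, j)) e * p e
        = -(p (Sum.inl i) + p (Sum.inr j)) := by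
      intro hX
      rw [Fintype.sum_sum_type]
      simp [hw, hX, ite_mul, Finset.sum_ite_eq']
      ring
    rw [s1] at h1
    simp only [hbb, Sum.elim_inl] at h1
    refine ⟨h1, fun hX => ?_⟩
    rw [s2 hX] at h2
    simp only [hbb, Sum.elim_inr, if_pos hX] at h2
    linarith
  · rintro ⟨hF, lam, mu, hlm⟩
    refine ⟨hF, fun Y hYf => ?_⟩
    obtain ⟨hYnn, hYcol, hYrow⟩ := hYf
    obtain ⟨hXnn, hXcol, hXrow⟩ := hF
    have key : ∀ (Z : ι → κ → ℝ), (∀ j, ∑ i, Z i j = c j) → (∀ i, ∑ j, Z i j = r i) →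
        ∑ i, ∑ j, (lam i + mu j) * Z i j = (∑ i, lam i * r i) + (∑ j, mu j * c j) := by
      intro Z hZc hZr
      have : ∑ i, ∑ j, (lam i + mu j) * Z i j
          = ∑ i, (lam i * (∑ j, Z i j)) + ∑ i, ∑ j, mu j * Z i j := by
        rw [← Finset.sum_add_distrib]
        refine Finset.sum_congr rfl fun i _ => ?_
        rw [Finset.mul_sum, ← Finset.sum_add_distrib]
        exact Finset.sum_congr rfl fun j _ => by ring
      rw [this, Finset.sum_comm (s := Finset.univ) (t := Finset.univ)
        (f := fun i j => mu j * Z i j)]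
      congr 1
      · exact Finset.sum_congr rfl fun i _ => by rw [hZr i]
      · exact Finset.sum_congr rfl fun j _ => by rw [← Finset.mul_sum, hZc j]
    have hYle : ∑ i, ∑ j, a i j * Y i j ≤ ∑ i, ∑ j, (lam i + mu j) * Y i j := by
      refine Finset.sum_le_sum fun i _ => Finset.sum_le_sum fun j _ => ?_
      exact mul_le_mul_of_nonneg_right (hlm i j).1 (hYnn i j)
    have hXeq : ∑ i, ∑ j, a i j * X i j = ∑ i, ∑ j, (lam i + mu j) * X i j := by
      refine Finset.sum_congr rfl fun i _ => Finset.sum_congr rfl fun j _ => ?_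
      by_cases hX : 0 < X i j
      · rw [(hlm i j).2 hX]
      · rw [le_antisymm (le_of_not_gt hX) (hXnn i j)]; ring
    calc ∑ i, ∑ j, a i j * Y i j ≤ ∑ i, ∑ j, (lam i + mu j) * Y i j := hYle
      _ = (∑ i, lam i * r i) + (∑ j, mu j * c j) := key Y hYcol hYrow
      _ = ∑ i, ∑ j, (lam i + mu j) * X i j := (key X hXcol hXrow).symm
      _ = ∑ i, ∑ j, a i j * X i j := hXeq.symm
end

section
/- A matrix X ∈ ℝ_+^{n×m} is a balanced solution of the linear MOMA maximization problem with coefficients b_{ij} > 0, column sums c_j, and row sums r_i, if and only if X is an optimal solution of the optimal transport (Monge–Kantorovich) maximization problem with weights a_{ij} = log b_{ij} and the same row and column sum constraints. -/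
open Finset

/-- Primary feasibility: nonnegative entries and prescribed column sums. -/
def PrimFeasible {ι κ : Type*} [Fintype ι] (c : κ → ℝ) (X : ι → κ → ℝ) : Prop :=
  (∀ i j, 0 ≤ X i j) ∧ ∀ j, ∑ i, X i j = c j

/-- Pareto efficiency for the linear objectives `Ψ i = ∑ j, b i j * x i j`
subject to the primary constraints. -/
def ParetoEffLin {ι κ : Type*} [Fintype ι] [Fintype κ]
    (b : ι → κ → ℝ) (c : κ → ℝ) (X : ι → κ → ℝ) : Prop :=
  PrimFeasible c X ∧
    ¬ ∃ Y : ι → κ → ℝ, PrimFeasible c Y ∧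
      (∀ i, ∑ j, b i j * X i j ≤ ∑ j, b i j * Y i j) ∧
      (∃ i, ∑ j, b i j * X i j < ∑ j, b i j * Y i j)

/-- Balanced solution of the linear MOMA problem. -/
def BalancedLin {ι κ : Type*} [Fintype ι] [Fintype κ]
    (b : ι → κ → ℝ) (c : κ → ℝ) (r : ι → ℝ) (X : ι → κ → ℝ) : Prop :=
  ParetoEffLin b c X ∧ ∀ i, ∑ j, X i j = r i

section AuxMOMA

variable {ι κ : Type*} [Fintype ι] [Fintype κ]

/-- Potential (dual) condition. -/
def IsPot (b : ι → κ → ℝ) (X : ι → κ → ℝ) (u : ι → ℝ) : Prop :=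
  ∀ i j k, 0 < X i j → u k + Real.log (b k j) ≤ u i + Real.log (b i j)

lemma sum_range_shift (f : ℕ → ℝ) (n : ℕ) :
    ∑ t ∈ range n, f (t + 1) = ∑ t ∈ range n, f t + f n - f 0 := by
  have h1 := Finset.sum_range_succ' f n
  have h2 := Finset.sum_range_succ f n
  linarith

lemma pot_optimal [Nonempty ι] {b : ι → κ → ℝ} (hb : ∀ i j, 0 < b i j)
    {r : ι → ℝ} {c : κ → ℝ} {X : ι → κ → ℝ} {u : ι → ℝ}
    (hX : Feasible r c X) (hu : IsPot b X u)
    (Y : ι → κ → ℝ) (hY : Feasible r c Y) :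
    ∑ i, ∑ j, Real.log (b i j) * Y i j ≤ ∑ i, ∑ j, Real.log (b i j) * X i j := by
  classical
  set a : ι → κ → ℝ := fun i j => Real.log (b i j) with ha
  set m : κ → ℝ := fun j => Finset.univ.sup' Finset.univ_nonempty (fun i => u i + a i j) with hm
  have hle : ∀ i j, a i j ≤ m j - u i := by
    intro i j
    have := Finset.le_sup' (fun i => u i + a i j) (Finset.mem_univ i)
    simp only [hm]
    linarith [this]
  have calcZ : ∀ Z : ι → κ → ℝ, (∀ j, ∑ i, Z i j = c j) → (∀ i, ∑ j, Z i j = r i) →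
      ∑ i, ∑ j, (m j - u i) * Z i j = ∑ j, m j * c j - ∑ i, u i * r i := by
    intro Z hZc hZr
    have e1 : ∑ i, ∑ j, (m j - u i) * Z i j
        = (∑ i, ∑ j, m j * Z i j) - ∑ i, ∑ j, u i * Z i j := by
      rw [← Finset.sum_sub_distrib]
      refine Finset.sum_congr rfl fun i _ => ?_
      rw [← Finset.sum_sub_distrib]
      refine Finset.sum_congr rfl fun j _ => ?_
      ring
    have e2 : ∑ i, ∑ j, m j * Z i j = ∑ j, m j * c j := by
      rw [Finset.sum_comm]
      refine Finset.sum_congr rfl fun j _ => ?_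
      rw [← Finset.mul_sum, hZc j]
    have e3 : ∑ i, ∑ j, u i * Z i j = ∑ i, u i * r i := by
      refine Finset.sum_congr rfl fun i _ => ?_
      rw [← Finset.mul_sum, hZr i]
    rw [e1, e2, e3]
  have hYle : ∑ i, ∑ j, a i j * Y i j ≤ ∑ j, m j * c j - ∑ i, u i * r i := by
    rw [← calcZ Y hY.2.1 hY.2.2]
    refine Finset.sum_le_sum fun i _ => Finset.sum_le_sum fun j _ => ?_
    exact mul_le_mul_of_nonneg_right (hle i j) (hY.1 i j)
  have hXeq : ∑ i, ∑ j, a i j * X i j = ∑ j, m j * c j - ∑ i, u i * r i := by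
    rw [← calcZ X hX.2.1 hX.2.2]
    refine Finset.sum_congr rfl fun i _ => Finset.sum_congr rfl fun j _ => ?_
    rcases eq_or_lt_of_le (hX.1 i j) with h | h
    · rw [← h, mul_zero, mul_zero]
    · have h1 : m j ≤ u i + a i j := by
        refine Finset.sup'_le _ _ fun k _ => ?_
        exact hu i j k h
      have h2 : u i + a i j ≤ m j := Finset.le_sup' (fun i => u i + a i j) (Finset.mem_univ i)
      have : m j = u i + a i j := le_antisymm h1 h2
      rw [this]; ring
  rw [hXeq] at *
  exact hYle

lemma pot_pareto [Nonempty ι] {b : ι → κ → ℝ} (hb : ∀ i j, 0 < b i j)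
    {c : κ → ℝ} {X : ι → κ → ℝ} {u : ι → ℝ}
    (hX0 : ∀ i j, 0 ≤ X i j) (hXc : ∀ j, ∑ i, X i j = c j) (hu : IsPot b X u) :
    ¬ ∃ Y : ι → κ → ℝ, PrimFeasible c Y ∧
      (∀ i, ∑ j, b i j * X i j ≤ ∑ j, b i j * Y i j) ∧
      (∃ i, ∑ j, b i j * X i j < ∑ j, b i j * Y i j) := by
  classical
  rintro ⟨Y, ⟨hY0, hYc⟩, hle, i0, hlt⟩
  set w : ι → ℝ := fun i => Real.exp (u i) with hw
  set M : κ → ℝ := fun j => Finset.univ.sup' Finset.univ_nonempty (fun i => w i * b i j) with hM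
  have hwM : ∀ i j, w i * b i j ≤ M j := fun i j =>
    Finset.le_sup' (fun i => w i * b i j) (Finset.mem_univ i)
  have swapit : ∀ Z : ι → κ → ℝ, ∑ i, w i * ∑ j, b i j * Z i j
      = ∑ j, ∑ i, (w i * b i j) * Z i j := by
    intro Z
    rw [Finset.sum_comm]
    refine Finset.sum_congr rfl fun i _ => ?_
    rw [Finset.mul_sum]
    refine Finset.sum_congr rfl fun j _ => ?_
    ring
  have hYb : ∑ i, w i * ∑ j, b i j * Y i j ≤ ∑ j, M j * c j := by
    rw [swapit]
    refine Finset.sum_le_sum fun j _ => ?_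
    calc ∑ i, (w i * b i j) * Y i j ≤ ∑ i, M j * Y i j :=
          Finset.sum_le_sum fun i _ => mul_le_mul_of_nonneg_right (hwM i j) (hY0 i j)
      _ = M j * c j := by rw [← Finset.mul_sum, hYc j]
  have hXb : ∑ i, w i * ∑ j, b i j * X i j = ∑ j, M j * c j := by
    rw [swapit]
    refine Finset.sum_congr rfl fun j _ => ?_
    have : ∑ i, (w i * b i j) * X i j = ∑ i, M j * X i j := by
      refine Finset.sum_congr rfl fun i _ => ?_
      rcases eq_or_lt_of_le (hX0 i j) with h | h
      · rw [← h, mul_zero, mul_zero]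
      · have h1 : M j ≤ w i * b i j := by
          refine Finset.sup'_le _ _ fun k _ => ?_
          have := hu i j k h
          have e : ∀ p (q : κ), w p * b p q = Real.exp (u p + Real.log (b p q)) := by
            intro p q
            rw [Real.exp_add, Real.exp_log (hb p q)]
          rw [e, e]
          exact Real.exp_le_exp.mpr this
        rw [le_antisymm h1 (hwM i j)]
      
    rw [this, ← Finset.mul_sum, hXc j]
  have hstrict : ∑ i, w i * ∑ j, b i j * X i j < ∑ i, w i * ∑ j, b i j * Y i j := by
    refine Finset.sum_lt_sum (fun i _ => mul_le_mul_of_nonneg_left (hle i) (Real.exp_pos _).le)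
      ⟨i0, Finset.mem_univ _, mul_lt_mul_of_pos_left hlt (Real.exp_pos _)⟩
  rw [hXb] at hstrict
  exact absurd (lt_of_lt_of_le hstrict hYb) (lt_irrefl _)

def NoPosCycle (b : ι → κ → ℝ) (X : ι → κ → ℝ) : Prop :=
  ∀ (n : ℕ) (I : ℕ → ι) (J : ℕ → κ), I n = I 0 →
    (∀ t, t < n → 0 < X (I t) (J t)) →
    ∑ t ∈ range n, Real.log (b (I (t + 1)) (J t)) ≤
      ∑ t ∈ range n, Real.log (b (I t) (J t))


lemma optimal_noPosCycle {b : ι → κ → ℝ} (hb : ∀ i j, 0 < b i j)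
    {r : ι → ℝ} {c : κ → ℝ} {X : ι → κ → ℝ} (hX : Feasible r c X)
    (hopt : ∀ Y, Feasible r c Y →
      ∑ i, ∑ j, Real.log (b i j) * Y i j ≤ ∑ i, ∑ j, Real.log (b i j) * X i j) :
    NoPosCycle b X := by
  classical
  intro n I J hIcl hsupp
  by_contra hcon
  push_neg at hcon
  rcases Nat.eq_zero_or_pos n with hn0 | hn
  · subst hn0; simp at hcon
  obtain ⟨t0, ht0, hmin⟩ := Finset.exists_min_image (range n) (fun t => X (I t) (J t))
    ⟨0, Finset.mem_range.2 hn⟩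
  set μ : ℝ := X (I t0) (J t0) with hμdef
  have hμ : 0 < μ := hsupp t0 (Finset.mem_range.1 ht0)
  set ε : ℝ := μ / n with hεdef
  have hε : 0 < ε := div_pos hμ (by exact_mod_cast hn)
  have hεn : ε * n = μ := by
    rw [hεdef]; exact div_mul_cancel₀ μ (Nat.cast_pos.2 hn).ne'
  set Y : ι → κ → ℝ := fun p q => X p q +
      ε * ((∑ t ∈ range n, if I (t + 1) = p ∧ J t = q then (1:ℝ) else 0)
         - ∑ t ∈ range n, if I t = p ∧ J t = q then (1:ℝ) else 0) with hYdef
  have hYfeas : Feasible r c Y := by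
    refine ⟨?_, ?_, ?_⟩
    · intro p q
      have hposs : 0 ≤ ∑ t ∈ range n, if I (t + 1) = p ∧ J t = q then (1:ℝ) else 0 :=
        Finset.sum_nonneg fun t _ => by split <;> norm_num
      by_cases hex : ∃ t ∈ range n, I t = p ∧ J t = q
      · obtain ⟨t, ht, hp, hq⟩ := hex
        have h1 : (∑ t ∈ range n, if I t = p ∧ J t = q then (1:ℝ) else 0) ≤ n := by
          calc (∑ t ∈ range n, if I t = p ∧ J t = q then (1:ℝ) else 0)
              ≤ ∑ _t ∈ range n, (1:ℝ) := Finset.sum_le_sum fun t _ => by split <;> norm_num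
            _ = n := by simp
        have h2 : μ ≤ X p q := by rw [← hp, ← hq]; exact hmin t ht
        have k1 : 0 ≤ ε * ∑ t ∈ range n, if I (t + 1) = p ∧ J t = q then (1:ℝ) else 0 :=
          mul_nonneg hε.le hposs
        have k2 : ε * (∑ t ∈ range n, if I t = p ∧ J t = q then (1:ℝ) else 0) ≤ ε * n :=
          mul_le_mul_of_nonneg_left h1 hε.le
        have k3 : Y p q = X p q
            + ε * (∑ t ∈ range n, if I (t + 1) = p ∧ J t = q then (1:ℝ) else 0)
            - ε * (∑ t ∈ range n, if I t = p ∧ J t = q then (1:ℝ) else 0) := by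
          rw [hYdef]; ring
        rw [k3]; linarith
      · push_neg at hex
        have hz : (∑ t ∈ range n, if I t = p ∧ J t = q then (1:ℝ) else 0) = 0 :=
          Finset.sum_eq_zero fun t ht => by
            rw [if_neg]
            rintro ⟨h1, h2⟩
            exact hex t ht h1 h2
        have k3 : Y p q = X p q
            + ε * (∑ t ∈ range n, if I (t + 1) = p ∧ J t = q then (1:ℝ) else 0) := by
          rw [hYdef]; simp [hz]
        rw [k3]
        have := mul_nonneg hε.le hposs
        linarith [hX.1 p q]
    · intro q
      have hsw : ∀ s : ℕ → ι, ∑ p, (∑ t ∈ range n, if s t = p ∧ J t = q then (1:ℝ) else 0)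
          = ∑ t ∈ range n, if J t = q then (1:ℝ) else 0 := by
        intro s
        rw [Finset.sum_comm]
        refine Finset.sum_congr rfl fun t _ => ?_
        simp only [ite_and]
        rw [Finset.sum_ite_eq]
        simp
      have : ∑ p, Y p q = (∑ p, X p q)
          + ε * ((∑ p, ∑ t ∈ range n, if I (t + 1) = p ∧ J t = q then (1:ℝ) else 0)
               - ∑ p, ∑ t ∈ range n, if I t = p ∧ J t = q then (1:ℝ) else 0) := by
        rw [hYdef, Finset.sum_add_distrib, ← Finset.mul_sum, Finset.sum_sub_distrib]
      rw [this, hsw (fun t => I (t + 1)), hsw I, hX.2.1 q]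
      ring
    · intro p
      have hsw : ∀ s : ℕ → ℕ, ∑ q, (∑ t ∈ range n, if I (s t) = p ∧ J t = q then (1:ℝ) else 0)
          = ∑ t ∈ range n, if I (s t) = p then (1:ℝ) else 0 := by
        intro s
        rw [Finset.sum_comm]
        refine Finset.sum_congr rfl fun t _ => ?_
        simp only [ite_and]
        rcases eq_or_ne (I (s t)) p with h | h
        · simp [h, Finset.sum_ite_eq (univ : Finset κ) (J t)]
        · simp [h]
      have : ∑ q, Y p q = (∑ q, X p q)
          + ε * ((∑ q, ∑ t ∈ range n, if I (t + 1) = p ∧ J t = q then (1:ℝ) else 0)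
               - ∑ q, ∑ t ∈ range n, if I t = p ∧ J t = q then (1:ℝ) else 0) := by
        rw [hYdef, Finset.sum_add_distrib, ← Finset.mul_sum, Finset.sum_sub_distrib]
      rw [this, hsw (fun t => t + 1), hsw (fun t => t), hX.2.2 p]
      have hshift := sum_range_shift (fun t => if I t = p then (1:ℝ) else 0) n
      rw [hshift, hIcl]
      ring
  -- objective strictly increases
  have hobj : ∑ i, ∑ j, Real.log (b i j) * Y i j
      = (∑ i, ∑ j, Real.log (b i j) * X i j)
        + ε * ((∑ t ∈ range n, Real.log (b (I (t + 1)) (J t)))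
             - ∑ t ∈ range n, Real.log (b (I t) (J t))) := by
    have hred : ∀ s : ℕ → ι,
        ∑ i, ∑ j, Real.log (b i j) * (∑ t ∈ range n, if s t = i ∧ J t = j then (1:ℝ) else 0)
        = ∑ t ∈ range n, Real.log (b (s t) (J t)) := by
      intro s
      have e1 : ∀ i j, Real.log (b i j) * (∑ t ∈ range n, if s t = i ∧ J t = j then (1:ℝ) else 0)
          = ∑ t ∈ range n, if s t = i ∧ J t = j then Real.log (b i j) else 0 := by
        intro i j
        rw [Finset.mul_sum]
        refine Finset.sum_congr rfl fun t _ => ?_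
        split <;> simp
      simp_rw [e1]
      rw [Finset.sum_congr rfl fun i (_ : i ∈ univ) => Finset.sum_comm, Finset.sum_comm]
      refine Finset.sum_congr rfl fun t _ => ?_
      have inner : ∀ i, ∑ j, (if s t = i ∧ J t = j then Real.log (b i j) else 0)
          = if s t = i then Real.log (b i (J t)) else 0 := by
        intro i
        rcases eq_or_ne (s t) i with h | h
        · simp only [h, true_and]
          rw [Finset.sum_ite_eq]
          simp
        · simp [h]
      simp_rw [inner]
      rw [Finset.sum_ite_eq]
      simp
    have hsplit : ∀ i j, Real.log (b i j) * Y i j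
        = Real.log (b i j) * X i j
          + ε * (Real.log (b i j) * ∑ t ∈ range n, if I (t + 1) = i ∧ J t = j then (1:ℝ) else 0)
          - ε * (Real.log (b i j) * ∑ t ∈ range n, if I t = i ∧ J t = j then (1:ℝ) else 0) := by
      intro i j; rw [hYdef]; ring
    simp only [hsplit, Finset.sum_sub_distrib, Finset.sum_add_distrib, ← Finset.mul_sum]
    rw [hred (fun t => I (t + 1)), hred I]
    ring
  have hfin := hopt Y hYfeas
  rw [hobj] at hfin
  have hp : 0 < ε * ((∑ t ∈ range n, Real.log (b (I (t + 1)) (J t)))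
      - ∑ t ∈ range n, Real.log (b (I t) (J t))) := mul_pos hε (sub_pos.2 hcon)
  linarith

lemma pareto_noPosCycle {b : ι → κ → ℝ} (hb : ∀ i j, 0 < b i j)
    {c : κ → ℝ} {X : ι → κ → ℝ}
    (hX0 : ∀ i j, 0 ≤ X i j) (hXc : ∀ j, ∑ i, X i j = c j)
    (hPar : ¬ ∃ Y : ι → κ → ℝ, PrimFeasible c Y ∧
      (∀ i, ∑ j, b i j * X i j ≤ ∑ j, b i j * Y i j) ∧
      (∃ i, ∑ j, b i j * X i j < ∑ j, b i j * Y i j)) :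
    NoPosCycle b X := by
  classical
  intro n I J0 hIcl hsupp0
  by_contra hcon0
  push_neg at hcon0
  rcases Nat.eq_zero_or_pos n with hn0 | hn
  · subst hn0; simp at hcon0
  -- periodic version of J
  set J : ℕ → κ := fun t => J0 (t % n) with hJdef
  have hJeq : ∀ t, t < n → J t = J0 t := fun t ht => by simp [hJdef, Nat.mod_eq_of_lt ht]
  have hJn : J n = J 0 := by simp [hJdef, Nat.mod_self]
  have hsupp : ∀ t, t < n → 0 < X (I t) (J t) := fun t ht => by
    rw [hJeq t ht]; exact hsupp0 t ht
  have hcon : ∑ t ∈ range n, Real.log (b (I t) (J t))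
      < ∑ t ∈ range n, Real.log (b (I (t + 1)) (J t)) := by
    have e1 : ∑ t ∈ range n, Real.log (b (I t) (J t))
        = ∑ t ∈ range n, Real.log (b (I t) (J0 t)) :=
      Finset.sum_congr rfl fun t ht => by rw [hJeq t (Finset.mem_range.1 ht)]
    have e2 : ∑ t ∈ range n, Real.log (b (I (t + 1)) (J t))
        = ∑ t ∈ range n, Real.log (b (I (t + 1)) (J0 t)) :=
      Finset.sum_congr rfl fun t ht => by rw [hJeq t (Finset.mem_range.1 ht)]
    rw [e1, e2]; exact hcon0
  -- multipliers
  set P : ℕ → ℝ := fun t => ∏ s ∈ range t, (b (I (s + 1)) (J s) / b (I (s + 1)) (J (s + 1)))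
    with hPdef
  have hPpos : ∀ t, 0 < P t := fun t => Finset.prod_pos fun s _ => div_pos (hb _ _) (hb _ _)
  have hP0 : P 0 = 1 := by simp [hPdef]
  have hPrec : ∀ t, P (t + 1) * b (I (t + 1)) (J (t + 1)) = P t * b (I (t + 1)) (J t) := by
    intro t
    have : P (t + 1) = P t * (b (I (t + 1)) (J t) / b (I (t + 1)) (J (t + 1))) := by
      rw [hPdef]; exact Finset.prod_range_succ _ t
    rw [this, mul_assoc, div_mul_cancel₀ _ (hb (I (t + 1)) (J (t + 1))).ne']
  -- P n > 1
  have hPn : 1 < P n := by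
    have hNpos : 0 < ∏ s ∈ range n, b (I (s + 1)) (J s) :=
      Finset.prod_pos fun s _ => hb _ _
    have hDpos : 0 < ∏ s ∈ range n, b (I (s + 1)) (J (s + 1)) :=
      Finset.prod_pos fun s _ => hb _ _
    have hsum : ∑ s ∈ range n, Real.log (b (I (s + 1)) (J (s + 1)))
        = ∑ s ∈ range n, Real.log (b (I s) (J s)) := by
      have := sum_range_shift (fun s => Real.log (b (I s) (J s))) n
      rw [hIcl, hJn] at this
      linarith
    have hlt : ∏ s ∈ range n, b (I (s + 1)) (J (s + 1))
        < ∏ s ∈ range n, b (I (s + 1)) (J s) := by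
      rw [← Real.exp_log hDpos, ← Real.exp_log hNpos]
      apply Real.exp_lt_exp.2
      rw [Real.log_prod (fun s _ => (hb _ _).ne'),
        Real.log_prod (fun s _ => (hb _ _).ne'), hsum]
      exact hcon
    have : P n = (∏ s ∈ range n, b (I (s + 1)) (J s))
        / ∏ s ∈ range n, b (I (s + 1)) (J (s + 1)) := by
      rw [hPdef]; exact Finset.prod_div_distrib _ _
    rw [this]
    exact (one_lt_div hDpos).2 hlt
  -- step size
  obtain ⟨t0, ht0, hmin⟩ := Finset.exists_min_image (range n) (fun t => X (I t) (J t))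
    ⟨0, Finset.mem_range.2 hn⟩
  set μ : ℝ := X (I t0) (J t0) with hμdef
  have hμ : 0 < μ := hsupp t0 (Finset.mem_range.1 ht0)
  set S : ℝ := ∑ t ∈ range n, P t with hSdef
  have hS : 0 < S := Finset.sum_pos (fun t _ => hPpos t) ⟨0, Finset.mem_range.2 hn⟩
  set δ : ℝ := μ / S with hδdef
  have hδ : 0 < δ := div_pos hμ hS
  have hδS : δ * S = μ := by rw [hδdef]; exact div_mul_cancel₀ μ hS.ne'
  -- the improved matrix
  set Y : ι → κ → ℝ := fun p q => X p q
      + (∑ t ∈ range n, (δ * P t) * (if I (t + 1) = p ∧ J t = q then (1:ℝ) else 0))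
      - ∑ t ∈ range n, (δ * P t) * (if I t = p ∧ J t = q then (1:ℝ) else 0) with hYdef
  have hεpos : ∀ t, 0 ≤ δ * P t := fun t => (mul_pos hδ (hPpos t)).le
  have hYfeas : PrimFeasible c Y := by
    constructor
    · intro p q
      have hposs : 0 ≤ ∑ t ∈ range n, (δ * P t) * (if I (t + 1) = p ∧ J t = q then (1:ℝ) else 0) :=
        Finset.sum_nonneg fun t _ => mul_nonneg (hεpos t) (by split <;> norm_num)
      by_cases hex : ∃ t ∈ range n, I t = p ∧ J t = q
      · obtain ⟨t, ht, hp, hq⟩ := hex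
        have h1 : (∑ t ∈ range n, (δ * P t) * (if I t = p ∧ J t = q then (1:ℝ) else 0))
            ≤ ∑ t ∈ range n, δ * P t := by
          refine Finset.sum_le_sum fun t _ => ?_
          have : (if I t = p ∧ J t = q then (1:ℝ) else 0) ≤ 1 := by split <;> norm_num
          calc (δ * P t) * (if I t = p ∧ J t = q then (1:ℝ) else 0)
              ≤ (δ * P t) * 1 := mul_le_mul_of_nonneg_left this (hεpos t)
            _ = δ * P t := mul_one _
        have h2 : ∑ t ∈ range n, δ * P t = μ := by rw [← Finset.mul_sum, ← hSdef, hδS]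
        have h3 : μ ≤ X p q := by rw [← hp, ← hq]; exact hmin t ht
        rw [hYdef]
        simp only []
        linarith
      · push_neg at hex
        have hz : (∑ t ∈ range n, (δ * P t) * (if I t = p ∧ J t = q then (1:ℝ) else 0)) = 0 :=
          Finset.sum_eq_zero fun t ht => by
            rw [if_neg, mul_zero]
            rintro ⟨h1, h2⟩
            exact hex t ht h1 h2
        rw [hYdef]
        simp only [hz]
        linarith [hX0 p q, hposs]
    · intro q
      have hsw : ∀ s : ℕ → ι,
          ∑ p, (∑ t ∈ range n, (δ * P t) * (if s t = p ∧ J t = q then (1:ℝ) else 0))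
          = ∑ t ∈ range n, (δ * P t) * (if J t = q then (1:ℝ) else 0) := by
        intro s
        rw [Finset.sum_comm]
        refine Finset.sum_congr rfl fun t _ => ?_
        simp only [ite_and, mul_ite, mul_one, mul_zero]
        rw [Finset.sum_ite_eq]
        simp
      have : ∑ p, Y p q = (∑ p, X p q)
          + ((∑ p, ∑ t ∈ range n, (δ * P t) * (if I (t + 1) = p ∧ J t = q then (1:ℝ) else 0))
           - ∑ p, ∑ t ∈ range n, (δ * P t) * (if I t = p ∧ J t = q then (1:ℝ) else 0)) := by
        rw [hYdef]
        rw [Finset.sum_sub_distrib, Finset.sum_add_distrib]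
        ring
      rw [this, hsw (fun t => I (t + 1)), hsw I, hXc q]
      ring
  -- objective changes
  have hred2 : ∀ (s : ℕ → ι) (p : ι),
      ∑ j, b p j * ∑ t ∈ range n, (δ * P t) * (if s t = p ∧ J t = j then (1:ℝ) else 0)
      = ∑ t ∈ range n, (δ * P t) * b p (J t) * (if s t = p then (1:ℝ) else 0) := by
    intro s p
    have e1 : ∀ j, b p j * ∑ t ∈ range n, (δ * P t) * (if s t = p ∧ J t = j then (1:ℝ) else 0)
        = ∑ t ∈ range n, (if s t = p ∧ J t = j then (δ * P t) * b p j else 0) := by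
      intro j
      rw [Finset.mul_sum]
      refine Finset.sum_congr rfl fun t _ => ?_
      split <;> ring
    simp_rw [e1]
    rw [Finset.sum_comm]
    refine Finset.sum_congr rfl fun t _ => ?_
    rcases eq_or_ne (s t) p with h | h
    · simp only [h, true_and, if_pos rfl, mul_one]
      rw [Finset.sum_ite_eq]
      simp
    · simp [h]
  have hΔ : ∀ p, ∑ j, b p j * Y p j = ∑ j, b p j * X p j
      + (if I 0 = p then (1:ℝ) else 0) * (δ * b (I 0) (J 0) * (P n - 1)) := by
    intro p
    have hexp : ∑ j, b p j * Y p j = ∑ j, b p j * X p j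
        + ((∑ j, b p j * ∑ t ∈ range n, (δ * P t) * (if I (t + 1) = p ∧ J t = j then (1:ℝ) else 0))
         - ∑ j, b p j * ∑ t ∈ range n, (δ * P t) * (if I t = p ∧ J t = j then (1:ℝ) else 0)) := by
      rw [hYdef]
      simp only [mul_sub, mul_add]
      rw [Finset.sum_sub_distrib, Finset.sum_add_distrib]
      ring
    rw [hexp, hred2 (fun t => I (t + 1)) p, hred2 I p]
    set f : ℕ → ℝ := fun t => (δ * P t) * b (I t) (J t) * (if I t = p then (1:ℝ) else 0)
      with hfdef
    have e2 : ∀ t, (δ * P t) * b p (J t) * (if I (t + 1) = p then (1:ℝ) else 0) = f (t + 1) := by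
      intro t
      rcases eq_or_ne (I (t + 1)) p with h | h
      · have hrec := hPrec t
        rw [h] at hrec
        rw [hfdef]
        simp [h]
        linear_combination δ * hrec.symm
      · rw [hfdef]; simp [h]
    have e3 : ∑ t ∈ range n, (δ * P t) * b p (J t) * (if I (t + 1) = p then (1:ℝ) else 0)
        = ∑ t ∈ range n, f (t + 1) := Finset.sum_congr rfl fun t _ => e2 t
    have e4 : ∑ t ∈ range n, (δ * P t) * b p (J t) * (if I t = p then (1:ℝ) else 0)
        = ∑ t ∈ range n, f t := by
      refine Finset.sum_congr rfl fun t _ => ?_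
      rcases eq_or_ne (I t) p with h | h
      · rw [hfdef]; simp [h]
      · rw [hfdef]; simp [h]
    rw [e3, e4, sum_range_shift f n]
    have hfn : f n = (δ * P n) * b (I 0) (J 0) * (if I 0 = p then (1:ℝ) else 0) := by
      rw [hfdef]; simp only [hIcl, hJn]
    have hf0 : f 0 = δ * b (I 0) (J 0) * (if I 0 = p then (1:ℝ) else 0) := by
      rw [hfdef]; simp [hP0]
    rw [hfn, hf0]
    ring
  -- contradiction with Pareto efficiency
  refine hPar ⟨Y, hYfeas, fun p => ?_, ⟨I 0, ?_⟩⟩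
  · rw [hΔ p]
    have hE : 0 ≤ δ * b (I 0) (J 0) * (P n - 1) :=
      mul_nonneg (mul_nonneg hδ.le (hb (I 0) (J 0)).le) (by linarith)
    have h1 : 0 ≤ (if I 0 = p then (1:ℝ) else 0) * (δ * b (I 0) (J 0) * (P n - 1)) :=
      mul_nonneg (by split <;> norm_num) hE
    linarith
  · rw [hΔ (I 0)]
    have h1 : (if I 0 = I 0 then (1:ℝ) else 0) = 1 := if_pos rfl
    rw [h1, one_mul]
    have hE : 0 < δ * b (I 0) (J 0) * (P n - 1) :=
      mul_pos (mul_pos hδ (hb (I 0) (J 0))) (by linarith)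
    linarith

lemma noPosCycle_pot [Nonempty ι] {b : ι → κ → ℝ} {X : ι → κ → ℝ}
    (hS : ∀ i, ∃ j, 0 < X i j) (hnc : NoPosCycle b X) :
    ∃ u : ι → ℝ, IsPot b X u := by
  classical
  set a : ι → κ → ℝ := fun i j => Real.log (b i j) with ha
  have hFne : ∀ i k : ι,
      ((univ.filter fun j => 0 < X i j).image fun j => a k j - a i j).Nonempty := by
    intro i k
    obtain ⟨j, hj⟩ := hS i
    exact ⟨a k j - a i j, Finset.mem_image.2
      ⟨j, Finset.mem_filter.2 ⟨Finset.mem_univ _, hj⟩, rfl⟩⟩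
  set d : ι → ι → ℝ := fun i k =>
    ((univ.filter fun j => 0 < X i j).image fun j => a k j - a i j).max' (hFne i k) with hd
  have hd1 : ∀ i k j, 0 < X i j → a k j - a i j ≤ d i k := by
    intro i k j hj
    have hmem : a k j - a i j ∈ ((univ.filter fun j => 0 < X i j).image fun j => a k j - a i j) :=
      Finset.mem_image.2 ⟨j, Finset.mem_filter.2 ⟨Finset.mem_univ _, hj⟩, rfl⟩
    exact Finset.le_max' _ _ hmem
  have hd2 : ∀ i k, ∃ j, 0 < X i j ∧ d i k = a k j - a i j := by
    intro i k
    have hmem := Finset.max'_mem _ (hFne i k)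
    rw [Finset.mem_image] at hmem
    obtain ⟨j, hj, hje⟩ := hmem
    exact ⟨j, (Finset.mem_filter.1 hj).2, hje.symm⟩
  -- no positive cycles for d
  have hcyc : ∀ (n : ℕ) (I : ℕ → ι), I n = I 0 →
      ∑ t ∈ range n, d (I t) (I (t + 1)) ≤ 0 := by
    intro n I hI
    set J : ℕ → κ := fun t => (hd2 (I t) (I (t + 1))).choose with hJ
    have hJ1 : ∀ t, 0 < X (I t) (J t) := fun t => (hd2 (I t) (I (t + 1))).choose_spec.1
    have hJ2 : ∀ t, d (I t) (I (t + 1)) = a (I (t + 1)) (J t) - a (I t) (J t) :=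
      fun t => (hd2 (I t) (I (t + 1))).choose_spec.2
    have hle := hnc n I J hI (fun t _ => hJ1 t)
    calc ∑ t ∈ range n, d (I t) (I (t + 1))
        = ∑ t ∈ range n, (a (I (t + 1)) (J t) - a (I t) (J t)) :=
          Finset.sum_congr rfl fun t _ => hJ2 t
      _ = (∑ t ∈ range n, a (I (t + 1)) (J t)) - ∑ t ∈ range n, a (I t) (J t) :=
          Finset.sum_sub_distrib _ _
      _ ≤ 0 := sub_nonpos.2 hle
  -- bound on walk weights
  set N := Fintype.card ι with hN
  set C : ℝ := max 0 (Finset.univ.sup' Finset.univ_nonempty fun p : ι × ι => d p.1 p.2) with hC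
  have hC0 : (0:ℝ) ≤ C := le_max_left _ _
  have hdC : ∀ i k, d i k ≤ C := fun i k =>
    le_trans (Finset.le_sup' (fun p : ι × ι => d p.1 p.2) (Finset.mem_univ (i, k)))
      (le_max_right _ _)
  have hbound : ∀ (m : ℕ) (I : ℕ → ι),
      (∑ t ∈ range m, d (I t) (I (t + 1))) ≤ N * C := by
    intro m
    induction m using Nat.strong_induction_on with
    | _ m ih =>
      intro I
      by_cases hm : m ≤ N
      · calc (∑ t ∈ range m, d (I t) (I (t + 1))) ≤ ∑ _t ∈ range m, C :=
              Finset.sum_le_sum fun t _ => hdC _ _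
          _ = (m : ℝ) * C := by rw [Finset.sum_const, Finset.card_range, nsmul_eq_mul]
          _ ≤ N * C := mul_le_mul_of_nonneg_right (by exact_mod_cast hm) hC0
      · push_neg at hm
        obtain ⟨p, q, hpq, hqN, hIpq⟩ : ∃ p q, p < q ∧ q ≤ N ∧ I p = I q := by
          obtain ⟨x, hx, y, hy, hxy, hf⟩ :=
            Finset.exists_ne_map_eq_of_card_lt_of_maps_to
              (s := range (N + 1)) (t := (univ : Finset ι))
              (by simp [hN]) (fun x _ => Finset.mem_univ (I x))
          rcases Nat.lt_or_ge x y with h | h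
          · exact ⟨x, y, h, by have := Finset.mem_range.1 hy; omega, hf⟩
          · exact ⟨y, x, by omega, by have := Finset.mem_range.1 hx; omega, hf.symm⟩
        set c := q - p with hc
        have hc1 : 0 < c := by omega
        have hqpc : q = p + c := by omega
        set m' := m - c with hm'
        have hpm' : p ≤ m' := by omega
        have hm'c : m' + c = m := by omega
        have hm'm : m' < m := by omega
        set I' : ℕ → ι := fun t => if t < p then I t else I (t + c) with hI'
        have hterm1 : ∀ t, t < p → d (I' t) (I' (t + 1)) = d (I t) (I (t + 1)) := by
          intro t ht
          have e1 : I' t = I t := if_pos ht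
          have e2 : I' (t + 1) = I (t + 1) := by
            by_cases h : t + 1 < p
            · exact if_pos h
            · have hp1 : t + 1 = p := by omega
              have : I' (t + 1) = I (t + 1 + c) := if_neg h
              rw [this, hp1, ← hqpc, ← hIpq]
          rw [e1, e2]
        have hterm2 : ∀ t, p ≤ t → d (I' t) (I' (t + 1)) = d (I (t + c)) (I (t + c + 1)) := by
          intro t ht
          have e1 : I' t = I (t + c) := if_neg (by omega)
          have e2 : I' (t + 1) = I (t + c + 1) := by
            have : I' (t + 1) = I (t + 1 + c) := if_neg (by omega)
            rw [this]
            congr 1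
            omega
          rw [e1, e2]
        -- middle cycle is nonpositive
        have hmid : ∑ t ∈ Finset.Ico p q, d (I t) (I (t + 1)) ≤ 0 := by
          have hcl : (fun t => I (p + t)) c = (fun t => I (p + t)) 0 := by
            simp only []
            rw [← hqpc, Nat.add_zero, hIpq]
          have h0 := hcyc c (fun t => I (p + t)) hcl
          rw [Finset.sum_Ico_eq_sum_range]
          exact h0
        -- decompose
        have split1 : ∑ t ∈ range m, d (I t) (I (t + 1))
            = (∑ t ∈ range p, d (I t) (I (t + 1)))
              + (∑ t ∈ Finset.Ico p q, d (I t) (I (t + 1)))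
              + ∑ t ∈ Finset.Ico q m, d (I t) (I (t + 1)) := by
          rw [Finset.range_eq_Ico,
            ← Finset.sum_Ico_consecutive _ (Nat.zero_le q) (by omega : q ≤ m),
            ← Finset.sum_Ico_consecutive _ (Nat.zero_le p) (le_of_lt hpq),
            ← Finset.range_eq_Ico]
        have split2 : ∑ t ∈ range m', d (I' t) (I' (t + 1))
            = (∑ t ∈ range p, d (I' t) (I' (t + 1)))
              + ∑ t ∈ Finset.Ico p m', d (I' t) (I' (t + 1)) := by
          rw [Finset.range_eq_Ico,
            ← Finset.sum_Ico_consecutive _ (Nat.zero_le p) hpm',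
            ← Finset.range_eq_Ico]
        have head : ∑ t ∈ range p, d (I' t) (I' (t + 1))
            = ∑ t ∈ range p, d (I t) (I (t + 1)) :=
          Finset.sum_congr rfl fun t ht => hterm1 t (Finset.mem_range.1 ht)
        have tail : ∑ t ∈ Finset.Ico p m', d (I' t) (I' (t + 1))
            = ∑ t ∈ Finset.Ico q m, d (I t) (I (t + 1)) := by
          rw [Finset.sum_Ico_eq_sum_range, Finset.sum_Ico_eq_sum_range]
          have hmm : m' - p = m - q := by omega
          rw [hmm]
          refine Finset.sum_congr rfl fun i _ => ?_
          rw [hterm2 (p + i) (by omega)]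
          have h1 : p + i + c = q + i := by omega
          rw [h1]
        have hIH := ih m' hm'm I'
        rw [split2, head, tail] at hIH
        rw [split1]
        linarith
  -- sup over walk weights
  set W : ι → Set ℝ := fun k =>
    {w | ∃ (m : ℕ) (I : ℕ → ι), I m = k ∧ w = ∑ t ∈ range m, d (I t) (I (t + 1))} with hW
  have hWne : ∀ k, (W k).Nonempty := fun k => ⟨0, 0, fun _ => k, rfl, by simp⟩
  have hWbdd : ∀ k, BddAbove (W k) := by
    intro k
    refine ⟨N * C, fun w hw => ?_⟩
    obtain ⟨m, I, _, rfl⟩ := hw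
    exact hbound m I
  set u' : ι → ℝ := fun k => sSup (W k) with hu'
  have hstep : ∀ i k, u' i + d i k ≤ u' k := by
    intro i k
    have h1 : ∀ w ∈ W i, w + d i k ∈ W k := by
      rintro w ⟨m, I, hIm, rfl⟩
      set g : ℕ → ι := fun t => if t ≤ m then I t else k with hg
      have hg1 : ∀ t, t ≤ m → g t = I t := by
        intro t ht
        rw [hg]
        exact if_pos ht
      have hg2 : g (m + 1) = k := by
        rw [hg]
        exact if_neg (Nat.not_succ_le_self m)
      refine ⟨m + 1, g, hg2, ?_⟩
      rw [Finset.sum_range_succ]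
      congr 1
      · refine Finset.sum_congr rfl fun t ht => ?_
        have ht' := Finset.mem_range.1 ht
        rw [hg1 t (by omega), hg1 (t + 1) (by omega)]
      · rw [hg1 m le_rfl, hg2, hIm]
    have h2 : u' i ≤ u' k - d i k := by
      refine csSup_le (hWne i) fun w hw => ?_
      have := le_csSup (hWbdd k) (h1 w hw)
      linarith
    linarith
  refine ⟨fun k => -(u' k), ?_⟩
  intro i j k hXij
  show -(u' k) + Real.log (b k j) ≤ -(u' i) + Real.log (b i j)
  have h2 := hd1 i k j hXij
  have h3 := hstep i k
  simp only [ha] at h2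
  linarith

end AuxMOMA

/-- balanced solutions of the linear MOMA problem are exactly the
optimal solutions of the optimal transport problem with weights `log (b i j)`. -/
theorem stmt_6 {ι κ : Type*} [Fintype ι] [Fintype κ]
    (b : ι → κ → ℝ) (hb : ∀ i j, 0 < b i j)
    (r : ι → ℝ) (c : κ → ℝ) (hr : ∀ i, 0 < r i) (hc : ∀ j, 0 < c j)
    (hgf : ∑ i, r i = ∑ j, c j) (X : ι → κ → ℝ) :
    BalancedLin b c r X ↔
      (Feasible r c X ∧
        ∀ Y : ι → κ → ℝ, Feasible r c Y →
          ∑ i, ∑ j, Real.log (b i j) * Y i j ≤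
            ∑ i, ∑ j, Real.log (b i j) * X i j) := by
  classical
  rcases isEmpty_or_nonempty ι with hι | hι
  · haveI := hι
    rcases isEmpty_or_nonempty κ with hκ | hκ
    · haveI := hκ
      constructor
      · intro _
        refine ⟨⟨fun i _ => (hι.elim i), fun j => (hκ.elim j), fun i => (hι.elim i)⟩, ?_⟩
        intro Y _
        simp
      · intro _
        refine ⟨⟨⟨fun i _ => (hι.elim i), fun j => (hκ.elim j)⟩, ?_⟩, fun i => (hι.elim i)⟩
        rintro ⟨Y, _, _, i, _⟩
        exact hι.elim i
    · obtain ⟨j⟩ := hκ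
      have hfalse : ∑ i, X i j ≠ c j := by
        rw [Finset.univ_eq_empty, Finset.sum_empty]
        exact (hc j).ne
      constructor
      · rintro ⟨⟨⟨_, hXc⟩, _⟩, _⟩
        exact absurd (hXc j) hfalse
      · rintro ⟨⟨_, hXc, _⟩, _⟩
        exact absurd (hXc j) hfalse
  · rcases isEmpty_or_nonempty κ with hκ | hκ
    · haveI := hκ
      obtain ⟨i⟩ := hι
      have hfalse : ∑ j, X i j ≠ r i := by
        rw [Finset.univ_eq_empty, Finset.sum_empty]
        exact (hr i).ne
      constructor
      · rintro ⟨_, hXr⟩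
        exact absurd (hXr i) hfalse
      · rintro ⟨⟨_, _, hXr⟩, _⟩
        exact absurd (hXr i) hfalse
    · constructor
      · rintro ⟨⟨⟨hX0, hXc⟩, hPar⟩, hXr⟩
        have hXfeas : Feasible r c X := ⟨hX0, hXc, hXr⟩
        have hSup : ∀ i, ∃ j, 0 < X i j := by
          intro i
          by_contra h
          push_neg at h
          have h1 : ∑ j, X i j ≤ 0 := Finset.sum_nonpos fun j _ => h j
          rw [hXr i] at h1
          linarith [hr i]
        have hnc := pareto_noPosCycle hb hX0 hXc hPar
        obtain ⟨u, hu⟩ := noPosCycle_pot hSup hnc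
        exact ⟨hXfeas, fun Y hY => pot_optimal hb hXfeas hu Y hY⟩
      · rintro ⟨hXfeas, hopt⟩
        have hSup : ∀ i, ∃ j, 0 < X i j := by
          intro i
          by_contra h
          push_neg at h
          have h1 : ∑ j, X i j ≤ 0 := Finset.sum_nonpos fun j _ => h j
          rw [hXfeas.2.2 i] at h1
          linarith [hr i]
        have hnc := optimal_noPosCycle hb hXfeas hopt
        obtain ⟨u, hu⟩ := noPosCycle_pot hSup hnc
        refine ⟨⟨⟨hXfeas.1, hXfeas.2.1⟩, ?_⟩, hXfeas.2.2⟩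
        exact pot_pareto hb hXfeas.1 hXfeas.2.1 hu
end
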